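/- Every separable nonnegative matrix is sufficiently scattered: if cone(A) = ℝ₊^m, then the second-order cone 𝒞 = { x ∈ ℝ₊^m : 1ᵀx ≥ √(m−1)·‖x‖₂ } is contained in cone(A), and the only orthogonal matrices Q with cone(A) ⊆ cone(Q) are permutation matrices. -/
import Mathlib

open Matrix

theorem separable_imp_sufficiently_scattered
    {m n : ℕ} (A : Matrix (Fin m) (Fin n) ℝ) (hA : ∀ i j, 0 ≤ A i j)
    (hsep : ∀ x : Fin m → ℝ,
      (∃ θ : Fin n → ℝ, (∀ j, 0 ≤ θ j) ∧ x = A.mulVec θ) ↔ ∀ i, 0 ≤ x i) :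
    (∀ x : Fin m → ℝ, (∀ i, 0 ≤ x i) →
      Real.sqrt (m - 1) * Real.sqrt (∑ i, x i ^ 2) ≤ ∑ i, x i →
      ∃ θ : Fin n → ℝ, (∀ j, 0 ≤ θ j) ∧ x = A.mulVec θ) ∧
    (∀ Q : Matrix (Fin m) (Fin m) ℝ, Qᵀ * Q = 1 →
      (∀ x : Fin m → ℝ, (∃ θ : Fin n → ℝ, (∀ j, 0 ≤ θ j) ∧ x = A.mulVec θ) →
        ∃ θ : Fin m → ℝ, (∀ j, 0 ≤ θ j) ∧ x = Q.mulVec θ) →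
      ∃ σ : Equiv.Perm (Fin m), Q = σ.permMatrix ℝ) := by
  constructor
  · intro x hx _
    exact (hsep x).mpr hx
  · intro Q hQ hcone
    -- Q is entrywise nonnegative
    have hQnn : ∀ i j, 0 ≤ Q i j := by
      intro i j
      obtain ⟨θ, hθ, hx⟩ := hcone (Pi.single i 1)
        ((hsep _).mpr (by
          intro k
          by_cases h : k = i <;> simp [Pi.single_apply, h]))
      have hθeq : θ = Qᵀ.mulVec (Pi.single i 1) := by
        rw [hx, Matrix.mulVec_mulVec, hQ, Matrix.one_mulVec]
      have h2 := hθ j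
      rw [hθeq] at h2
      simpa [Matrix.mulVec, dotProduct, Pi.single_apply] using h2
    -- column orthonormality
    have hcol : ∀ j k, (∑ i, Q i j * Q i k) = if j = k then (1:ℝ) else 0 := by
      intro j k
      have := congrFun (congrFun hQ j) k
      simpa [Matrix.mul_apply, Matrix.transpose_apply, Matrix.one_apply] using this
    -- disjoint supports
    have hdisj : ∀ {j k : Fin m}, j ≠ k → ∀ i, Q i j * Q i k = 0 := by
      intro j k hjk i
      have hsum : (∑ i, Q i j * Q i k) = 0 := by rw [hcol]; simp [hjk]
      have hnn : ∀ i ∈ Finset.univ, 0 ≤ Q i j * Q i k := fun i _ =>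
        mul_nonneg (hQnn i j) (hQnn i k)
      exact (Finset.sum_eq_zero_iff_of_nonneg hnn).mp hsum i (Finset.mem_univ i)
    -- each column is nonzero
    have hnz : ∀ j : Fin m, ∃ i, Q i j ≠ 0 := by
      intro j
      by_contra hc
      push_neg at hc
      have := hcol j j
      simp [hc] at this
    choose f hf using hnz
    have hinj : Function.Injective f := by
      intro j k hjk
      by_contra hne
      have := hdisj hne (f j)
      rw [hjk] at this
      exact (mul_eq_zero.mp this).elim (fun h => hf j (hjk ▸ h)) (hf k)
    have hbij : Function.Bijective f := Finite.injective_iff_bijective.mp hinj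
    -- off entries are zero
    have hzero : ∀ i j, i ≠ f j → Q i j = 0 := by
      intro i j hij
      obtain ⟨k, hk⟩ := hbij.surjective i
      have hjk : j ≠ k := by
        intro h; exact hij (h ▸ hk.symm)
      have := hdisj hjk i
      rcases mul_eq_zero.mp this with h | h
      · exact h
      · exact absurd (hk ▸ h) (hf k)
    -- the nonzero entry is 1
    have hone : ∀ j, Q (f j) j = 1 := by
      intro j
      have hsum := hcol j j
      rw [Finset.sum_eq_single (f j)] at hsum
      · simp at hsum
        have := hQnn (f j) j
        nlinarith [hsum]
      · intro i _ hi
        rw [hzero i j hi, zero_mul]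
      · intro h; exact absurd (Finset.mem_univ _) h
    refine ⟨(Equiv.ofBijective f hbij).symm, ?_⟩
    ext i j
    rw [Equiv.Perm.permMatrix, PEquiv.toMatrix_apply, Equiv.toPEquiv_apply]
    by_cases h : i = f j
    · subst h
      simp [hone j, Equiv.symm_apply_eq, Equiv.ofBijective_apply]
    · rw [hzero i j h]
      have : j ≠ (Equiv.ofBijective f hbij).symm i := by
        intro hcon
        apply h
        rw [hcon]
        exact ((Equiv.ofBijective f hbij).apply_symm_apply i).symm
      simp only [Option.mem_def, Option.some.injEq]
      rw [if_neg (fun h => this h.symm)]
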